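/- For every n ≥ 0 the pair (r_n, p_n) lies in (0,1) × (0,1) (so the recursion is well defined), and the sequence (r_n) is strictly decreasing: r_{n+1} < r_n for all n ≥ 0. -/
import Mathlib


open Filter Finset Topology

/-- For the generalized Derrida–Retaux parameter recursion
`r_{n+1} = r_n / (m - (m-1) p_n)`,
`p_{n+1} = 1 - (1 - r_{n+1})(1 - r_{n+1} p_n / r_n)`
with `m > 1` and `(r_0, p_0) ∈ (0,1) × (0,1)`, every pair `(r_n, p_n)` lies in
`(0,1) × (0,1)` and the sequence `(r_n)` is strictly decreasing. -/
theorem stmt0 (m : ℝ) (hm : 1 < m) (r p : ℕ → ℝ)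
    (hr0 : r 0 ∈ Set.Ioo (0 : ℝ) 1) (hp0 : p 0 ∈ Set.Ioo (0 : ℝ) 1)
    (hrec_r : ∀ n, r (n + 1) = r n / (m - (m - 1) * p n))
    (hrec_p : ∀ n, p (n + 1) = 1 - (1 - r (n + 1)) * (1 - r (n + 1) * p n / r n)) :
    (∀ n, r n ∈ Set.Ioo (0 : ℝ) 1 ∧ p n ∈ Set.Ioo (0 : ℝ) 1) ∧
    (∀ n, r (n + 1) < r n) := by
  have key : ∀ n, r n ∈ Set.Ioo (0 : ℝ) 1 ∧ p n ∈ Set.Ioo (0 : ℝ) 1 := by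
    intro n
    induction n with
    | zero => exact ⟨hr0, hp0⟩
    | succ n ih =>
      obtain ⟨⟨hr1, hr2⟩, ⟨hp1, hp2⟩⟩ := ih
      have hd : 1 < m - (m - 1) * p n := by nlinarith
      have hd0 : (0 : ℝ) < m - (m - 1) * p n := by linarith
      have hrs : r (n + 1) < r n := by
        rw [hrec_r n, div_lt_iff₀ hd0]; nlinarith
      have hrpos : 0 < r (n + 1) := by
        rw [hrec_r n]; positivity
      have hrlt : r (n + 1) < 1 := lt_trans hrs hr2
      refine ⟨⟨hrpos, hrlt⟩, ?_⟩
      have hx : 0 < r (n + 1) * p n / r n := by positivity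
      have hx2 : r (n + 1) * p n / r n < 1 := by
        rw [div_lt_one hr1]; nlinarith
      constructor
      · rw [hrec_p n]; nlinarith
      · rw [hrec_p n]; nlinarith
  refine ⟨key, fun n => ?_⟩
  obtain ⟨⟨hr1, hr2⟩, ⟨hp1, hp2⟩⟩ := key n
  have hd : 1 < m - (m - 1) * p n := by nlinarith
  rw [hrec_r n, div_lt_iff₀ (by linarith : (0:ℝ) < m - (m - 1) * p n)]; nlinarith
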